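/- Let 0 < q < p ≤ 1, n ≥ 2, and α, β ≥ 0. For f(t) = t², the (p,q)-Bernstein-Stancu operator satisfies S_{n,p,q}(t²; x) = (q[n]_{p,q}[n-1]_{p,q} x² + [n]_{p,q}(2α + p^{n-1}) x + α²)/([n]_{p,q} + β)² for all x ∈ [0,1]. -/

import Mathlib

open Finset Filter

noncomputable def pqInt (p q : ℝ) (n : ℕ) : ℝ := ∑ i ∈ Finset.range n, p ^ (n - 1 - i) * q ^ i

noncomputable def pqFact (p q : ℝ) (n : ℕ) : ℝ := ∏ j ∈ Finset.range n, pqInt p q (j + 1)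

noncomputable def pqChoose (p q : ℝ) (n k : ℕ) : ℝ :=
  pqFact p q n / (pqFact p q k * pqFact p q (n - k))

noncomputable def pqBasis (p q : ℝ) (n k : ℕ) (x : ℝ) : ℝ :=
  (1 / p ^ (n * (n - 1) / 2)) * pqChoose p q n k * p ^ (k * (k - 1) / 2) * x ^ k *
    ∏ s ∈ Finset.range (n - k), (p ^ s - q ^ s * x)

noncomputable def S (p q α β : ℝ) (n : ℕ) (f : ℝ → ℝ) (x : ℝ) : ℝ :=
  ∑ k ∈ Finset.range (n + 1),
    pqBasis p q n k x * f ((p ^ (n - k) * pqInt p q k + α) / (pqInt p q n + β))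

lemma tri (k : ℕ) : k * (k - 1) / 2 + k = k * (k + 1) / 2 := by
  have h := Finset.sum_range_succ (fun i => i) k
  rw [Finset.sum_range_id, Finset.sum_range_id] at h
  simpa [mul_comm] using h.symm

lemma pqInt_zero (p q : ℝ) : pqInt p q 0 = 0 := by simp [pqInt]

lemma pqInt_succ (p q : ℝ) (k : ℕ) : pqInt p q (k + 1) = p ^ k + q * pqInt p q k := by
  rw [pqInt, Finset.sum_range_succ']
  have h0 : p ^ (k + 1 - 1 - 0) * q ^ 0 = p ^ k := by simp
  rw [h0, add_comm]
  congr 1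
  rw [pqInt, Finset.mul_sum]
  refine Finset.sum_congr rfl fun i hi => ?_
  have h : k + 1 - 1 - (i + 1) = k - 1 - i := by omega
  rw [h, pow_succ]
  ring

lemma pqInt_succ' (p q : ℝ) (k : ℕ) : pqInt p q (k + 1) = q ^ k + p * pqInt p q k := by
  rw [pqInt, Finset.sum_range_succ]
  have h0 : p ^ (k + 1 - 1 - k) * q ^ k = q ^ k := by simp
  rw [h0, add_comm]
  congr 1
  rw [pqInt, Finset.mul_sum]
  refine Finset.sum_congr rfl fun i hi => ?_
  have hi' : i < k := Finset.mem_range.mp hi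
  have h : k + 1 - 1 - i = (k - 1 - i) + 1 := by omega
  rw [h, pow_succ]
  ring

lemma pqInt_add (p q : ℝ) (a b : ℕ) :
    pqInt p q (a + b) = p ^ a * pqInt p q b + q ^ b * pqInt p q a := by
  induction a with
  | zero => simp [pqInt_zero]
  | succ a ih =>
    have h1 : a + 1 + b = (a + b) + 1 := by omega
    rw [h1, pqInt_succ, ih, pqInt_succ p q a]
    have h2 : p ^ (a + b) = p ^ a * p ^ b := by rw [← pow_add]
    have h3 : p ^ (a + 1) * pqInt p q b = p ^ a * (p * pqInt p q b) := by
      rw [pow_succ]; ring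
    rw [h2, h3]
    have h4 : p ^ b + q * pqInt p q b = pqInt p q (b + 1) := (pqInt_succ p q b).symm
    have h5 : q ^ b + p * pqInt p q b = pqInt p q (b + 1) := (pqInt_succ' p q b).symm
    calc p ^ a * p ^ b + q * (p ^ a * pqInt p q b + q ^ b * pqInt p q a)
        = p ^ a * (p ^ b + q * pqInt p q b) + q ^ b * (q * pqInt p q a) := by ring
      _ = p ^ a * (q ^ b + p * pqInt p q b) + q ^ b * (q * pqInt p q a) := by rw [h4, h5]
      _ = p ^ a * (p * pqInt p q b) + q ^ b * (p ^ a + q * pqInt p q a) := by ring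

section

variable {p q : ℝ} (hq : 0 < q) (hqp : q < p)
include hq hqp

lemma hp0 : 0 < p := hq.trans hqp

lemma pqInt_pos (k : ℕ) : 0 < pqInt p q (k + 1) := by
  rw [pqInt]
  apply Finset.sum_pos
  · intro i _
    exact mul_pos (pow_pos (hp0 hq hqp) _) (pow_pos hq _)
  · exact Finset.nonempty_range_add_one

lemma pqFact_pos (m : ℕ) : 0 < pqFact p q m := by
  rw [pqFact]
  exact Finset.prod_pos fun j _ => pqInt_pos hq hqp j

omit hq hqp in
lemma pqFact_succ (m : ℕ) : pqFact p q (m + 1) = pqFact p q m * pqInt p q (m + 1) := by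
  rw [pqFact, Finset.prod_range_succ, pqFact]

lemma pqChoose_zero (n : ℕ) : pqChoose p q n 0 = 1 := by
  rw [pqChoose]
  simp only [Nat.sub_zero, pqFact]
  rw [Finset.prod_range_zero, one_mul]
  exact div_self (ne_of_gt (pqFact_pos hq hqp n))

lemma pqChoose_self (n : ℕ) : pqChoose p q n n = 1 := by
  rw [pqChoose]
  simp only [Nat.sub_self, pqFact, Finset.prod_range_zero, mul_one]
  exact div_self (ne_of_gt (pqFact_pos hq hqp n))

lemma pqChoose_mul_int (n k : ℕ) (hk : k + 1 ≤ n) :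
    pqChoose p q n (k + 1) * pqInt p q (k + 1) = pqInt p q n * pqChoose p q (n - 1) k := by
  obtain ⟨m, rfl⟩ : ∃ m, n = m + 1 := ⟨n - 1, by omega⟩
  have hkm : k ≤ m := by omega
  rw [pqChoose, pqChoose, Nat.add_sub_cancel]
  have e1 : m + 1 - (k + 1) = m - k := by omega
  rw [e1, pqFact_succ m, pqFact_succ k]
  have h1 := ne_of_gt (pqFact_pos hq hqp m)
  have h2 := ne_of_gt (pqFact_pos hq hqp k)
  have h3 := ne_of_gt (pqFact_pos hq hqp (m - k))
  have h4 := ne_of_gt (pqInt_pos hq hqp k)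
  have h5 := ne_of_gt (pqInt_pos hq hqp m)
  field_simp

lemma pascal (n k : ℕ) (hk : k + 1 ≤ n) :
    pqChoose p q (n + 1) (k + 1) =
      p ^ (k + 1) * pqChoose p q n (k + 1) + q ^ (n - k) * pqChoose p q n k := by
  have key : pqInt p q (n + 1) =
      p ^ (k + 1) * pqInt p q (n - k) + q ^ (n - k) * pqInt p q (k + 1) := by
    have e : n + 1 = (k + 1) + (n - k) := by omega
    rw [e, pqInt_add]
  rw [pqChoose, pqChoose, pqChoose]
  have e1 : n + 1 - (k + 1) = n - k := by omega
  have e2 : n - (k + 1) = (n - k) - 1 := by omega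
  obtain ⟨m, hm⟩ : ∃ m, n - k = m + 1 := ⟨n - k - 1, by omega⟩
  rw [e1, e2, hm, Nat.add_sub_cancel]
  rw [pqFact_succ n, pqFact_succ k, pqFact_succ m]
  have h1 := ne_of_gt (pqFact_pos hq hqp n)
  have h2 := ne_of_gt (pqFact_pos hq hqp k)
  have h3 := ne_of_gt (pqFact_pos hq hqp m)
  have h4 := ne_of_gt (pqInt_pos hq hqp k)
  have h5 := ne_of_gt (pqInt_pos hq hqp m)
  have h6 := ne_of_gt (pqInt_pos hq hqp n)
  rw [key, hm]
  field_simp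

omit hq hqp in
lemma sum_shift (f g h : ℕ → ℝ) (n : ℕ) (h0 : f 0 = g 0) (hlast : f (n + 1) = h n)
    (hmid : ∀ k < n, f (k + 1) = g (k + 1) + h k) :
    ∑ k ∈ range (n + 2), f k = ∑ k ∈ range (n + 1), (g k + h k) := by
  rw [Finset.sum_range_succ' f (n + 1), Finset.sum_range_succ (fun i => f (i + 1)) n,
    Finset.sum_add_distrib, Finset.sum_range_succ' g n, Finset.sum_range_succ h n]
  have : ∑ k ∈ range n, f (k + 1) = ∑ k ∈ range n, (g (k + 1) + h k) :=
    Finset.sum_congr rfl fun k hk => hmid k (Finset.mem_range.mp hk)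
  rw [this, Finset.sum_add_distrib, h0, hlast]
  ring

omit hq hqp in
lemma exp_split (n : ℕ) :
    (p : ℝ) ^ ((n + 1) * (n + 1 - 1) / 2) = p ^ n * p ^ (n * (n - 1) / 2) := by
  rw [← pow_add]
  congr 1
  simp only [Nat.add_sub_cancel]
  rw [mul_comm (n + 1) n, ← tri n]
  omega

lemma gsum (n : ℕ) (x : ℝ) :
    ∑ k ∈ range (n + 1), pqChoose p q n k * p ^ (k * (k - 1) / 2) * x ^ k *
      ∏ s ∈ range (n - k), (p ^ s - q ^ s * x) = p ^ (n * (n - 1) / 2) := by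
  induction n with
  | zero => simp [pqChoose_self hq hqp 0]
  | succ n ih =>
    have hstep : ∑ k ∈ range (n + 2),
        (pqChoose p q (n + 1) k * p ^ (k * (k - 1) / 2) * x ^ k *
          ∏ s ∈ range (n + 1 - k), (p ^ s - q ^ s * x)) =
        ∑ k ∈ range (n + 1),
          ((pqChoose p q n k * p ^ (k * (k - 1) / 2 + k) * x ^ k *
            ∏ s ∈ range (n + 1 - k), (p ^ s - q ^ s * x)) +
          (q ^ (n - k) * pqChoose p q n k * p ^ ((k + 1) * k / 2) * x ^ (k + 1) *
            ∏ s ∈ range (n - k), (p ^ s - q ^ s * x))) := by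
      apply sum_shift
      · simp [pqChoose_zero hq hqp (n + 1), pqChoose_zero hq hqp n]
      · simp [pqChoose_self hq hqp (n + 1), pqChoose_self hq hqp n]
      · intro k hk
        have h1 : n + 1 - (k + 1) = n - k := by omega
        have h2 : (k + 1) * ((k + 1) - 1) / 2 = (k + 1) * k / 2 := by simp
        rw [pascal hq hqp n k (by omega), h1, h2, pow_add]
        ring
    calc ∑ k ∈ range (n + 1 + 1),
        pqChoose p q (n + 1) k * p ^ (k * (k - 1) / 2) * x ^ k *
          ∏ s ∈ range (n + 1 - k), (p ^ s - q ^ s * x)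
        = ∑ k ∈ range (n + 1),
          ((pqChoose p q n k * p ^ (k * (k - 1) / 2 + k) * x ^ k *
            ∏ s ∈ range (n + 1 - k), (p ^ s - q ^ s * x)) +
          (q ^ (n - k) * pqChoose p q n k * p ^ ((k + 1) * k / 2) * x ^ (k + 1) *
            ∏ s ∈ range (n - k), (p ^ s - q ^ s * x))) := hstep
      _ = ∑ k ∈ range (n + 1), p ^ n * (pqChoose p q n k * p ^ (k * (k - 1) / 2) * x ^ k *
            ∏ s ∈ range (n - k), (p ^ s - q ^ s * x)) := by
          refine Finset.sum_congr rfl fun k hk => ?_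
          have hkn : k ≤ n := by have := Finset.mem_range.mp hk; omega
          have h1 : n + 1 - k = (n - k) + 1 := by omega
          have h2 : (k + 1) * k / 2 = k * (k - 1) / 2 + k := by
            rw [mul_comm]; exact (tri k).symm
          have h3 : p ^ k * p ^ (n - k) = p ^ n := by rw [← pow_add]; congr 1; omega
          rw [h1, Finset.prod_range_succ, h2, pow_add, pow_add]
          linear_combination (pqChoose p q n k * p ^ (k * (k - 1) / 2) * x ^ k *
            ∏ s ∈ range (n - k), (p ^ s - q ^ s * x)) * h3
      _ = p ^ n * p ^ (n * (n - 1) / 2) := by rw [← Finset.mul_sum, ih]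
      _ = p ^ ((n + 1) * (n + 1 - 1) / 2) := (exp_split (p := p) n).symm

lemma hsum (m : ℕ) (x : ℝ) :
    ∑ k ∈ range (m + 1), pqChoose p q m k * p ^ (k * (k - 1) / 2) * x ^ k *
      (∏ s ∈ range (m - k), (p ^ s - q ^ s * x)) * (p ^ (m - k) * pqInt p q k) =
      pqInt p q m * x * p ^ (m * (m - 1) / 2) := by
  cases m with
  | zero => simp [pqInt_zero]
  | succ n =>
    rw [Finset.sum_range_succ' (fun k => pqChoose p q (n + 1) k * p ^ (k * (k - 1) / 2) * x ^ k *
      (∏ s ∈ range (n + 1 - k), (p ^ s - q ^ s * x)) * (p ^ (n + 1 - k) * pqInt p q k)) (n + 1)]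
    simp only [pqInt_zero, mul_zero, add_zero]
    have hterm : ∀ k ∈ range (n + 1),
        pqChoose p q (n + 1) (k + 1) * p ^ ((k + 1) * (k + 1 - 1) / 2) * x ^ (k + 1) *
          (∏ s ∈ range (n + 1 - (k + 1)), (p ^ s - q ^ s * x)) *
          (p ^ (n + 1 - (k + 1)) * pqInt p q (k + 1)) =
        (pqInt p q (n + 1) * x * p ^ n) * (pqChoose p q n k * p ^ (k * (k - 1) / 2) * x ^ k *
          ∏ s ∈ range (n - k), (p ^ s - q ^ s * x)) := by
      intro k hk
      have hkn : k ≤ n := by have := Finset.mem_range.mp hk; omega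
      have e1 : n + 1 - (k + 1) = n - k := by omega
      have hE : p ^ ((k + 1) * (k + 1 - 1) / 2) = p ^ (k * (k - 1) / 2) * p ^ k := by
        rw [← pow_add]
        congr 1
        simp only [Nat.add_sub_cancel]
        rw [mul_comm (k + 1) k, ← tri k]
      have hc : pqChoose p q (n + 1) (k + 1) * pqInt p q (k + 1) =
          pqInt p q (n + 1) * pqChoose p q n k := by
        have := pqChoose_mul_int hq hqp (n + 1) k (by omega)
        simpa using this
      have hpk : p ^ k * p ^ (n - k) = p ^ n := by rw [← pow_add]; congr 1; omega
      rw [e1]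
      linear_combination (x ^ (k + 1) * (∏ s ∈ range (n - k), (p ^ s - q ^ s * x)) *
          pqChoose p q (n + 1) (k + 1) * (p ^ (n - k) * pqInt p q (k + 1))) * hE +
        (x ^ (k + 1) * (∏ s ∈ range (n - k), (p ^ s - q ^ s * x)) * p ^ (k * (k - 1) / 2) *
          p ^ k * p ^ (n - k)) * hc +
        (x ^ (k + 1) * (∏ s ∈ range (n - k), (p ^ s - q ^ s * x)) * p ^ (k * (k - 1) / 2) *
          pqInt p q (n + 1) * pqChoose p q n k) * hpk
    rw [Finset.sum_congr rfl hterm, ← Finset.mul_sum, gsum hq hqp, exp_split]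
    ring

lemma h2sum (n : ℕ) (x : ℝ) :
    ∑ k ∈ range (n + 2), pqChoose p q (n + 1) k * p ^ (k * (k - 1) / 2) * x ^ k *
      (∏ s ∈ range (n + 1 - k), (p ^ s - q ^ s * x)) * (p ^ (n + 1 - k) * pqInt p q k) ^ 2 =
      (q * pqInt p q (n + 1) * pqInt p q n * x ^ 2 + p ^ n * pqInt p q (n + 1) * x) *
        p ^ ((n + 1) * (n + 1 - 1) / 2) := by
  rw [Finset.sum_range_succ' (fun k => pqChoose p q (n + 1) k * p ^ (k * (k - 1) / 2) * x ^ k *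
    (∏ s ∈ range (n + 1 - k), (p ^ s - q ^ s * x)) * (p ^ (n + 1 - k) * pqInt p q k) ^ 2) (n + 1)]
  simp only [pqInt_zero, mul_zero, zero_pow, ne_eq, OfNat.ofNat_ne_zero, not_false_eq_true,
    add_zero]
  have hterm : ∀ k ∈ range (n + 1),
      pqChoose p q (n + 1) (k + 1) * p ^ ((k + 1) * (k + 1 - 1) / 2) * x ^ (k + 1) *
        (∏ s ∈ range (n + 1 - (k + 1)), (p ^ s - q ^ s * x)) *
        (p ^ (n + 1 - (k + 1)) * pqInt p q (k + 1)) ^ 2 =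
      (pqInt p q (n + 1) * x * p ^ n) *
        (p ^ n * (pqChoose p q n k * p ^ (k * (k - 1) / 2) * x ^ k *
          ∏ s ∈ range (n - k), (p ^ s - q ^ s * x)) +
        q * (pqChoose p q n k * p ^ (k * (k - 1) / 2) * x ^ k *
          (∏ s ∈ range (n - k), (p ^ s - q ^ s * x)) * (p ^ (n - k) * pqInt p q k))) := by
    intro k hk
    have hkn : k ≤ n := by have := Finset.mem_range.mp hk; omega
    have e1 : n + 1 - (k + 1) = n - k := by omega
    have hE : p ^ ((k + 1) * (k + 1 - 1) / 2) = p ^ (k * (k - 1) / 2) * p ^ k := by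
      rw [← pow_add]
      congr 1
      simp only [Nat.add_sub_cancel]
      rw [mul_comm (k + 1) k, ← tri k]
    have hc : pqChoose p q (n + 1) (k + 1) * pqInt p q (k + 1) =
        pqInt p q (n + 1) * pqChoose p q n k := by
      have := pqChoose_mul_int hq hqp (n + 1) k (by omega)
      simpa using this
    have hpk : p ^ k * p ^ (n - k) = p ^ n := by rw [← pow_add]; congr 1; omega
    have hs : p ^ (n - k) * pqInt p q (k + 1) = p ^ n + q * (p ^ (n - k) * pqInt p q k) := by
      rw [pqInt_succ, mul_add]
      congr 1
      · rw [← pow_add]; congr 1; omega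
      · ring
    rw [e1]
    linear_combination (x ^ (k + 1) * (∏ s ∈ range (n - k), (p ^ s - q ^ s * x)) *
        pqChoose p q (n + 1) (k + 1) * (p ^ (n - k) * pqInt p q (k + 1)) ^ 2) * hE +
      (x ^ (k + 1) * (∏ s ∈ range (n - k), (p ^ s - q ^ s * x)) * p ^ (k * (k - 1) / 2) *
        p ^ k * pqChoose p q (n + 1) (k + 1) * (p ^ (n - k) * pqInt p q (k + 1))) * hs +
      (x ^ (k + 1) * (∏ s ∈ range (n - k), (p ^ s - q ^ s * x)) * p ^ (k * (k - 1) / 2) *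
        (p ^ n + q * (p ^ (n - k) * pqInt p q k)) * p ^ k * p ^ (n - k)) * hc +
      (x ^ (k + 1) * (∏ s ∈ range (n - k), (p ^ s - q ^ s * x)) * p ^ (k * (k - 1) / 2) *
        (p ^ n + q * (p ^ (n - k) * pqInt p q k)) * pqInt p q (n + 1) * pqChoose p q n k) * hpk
  rw [Finset.sum_congr rfl hterm, ← Finset.mul_sum, Finset.sum_add_distrib,
    ← Finset.mul_sum, ← Finset.mul_sum, gsum hq hqp, hsum hq hqp n x, exp_split]
  ring

end

theorem S_sq (p q α β : ℝ) (hq : 0 < q) (hqp : q < p) (hp : p ≤ 1)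
    (hα : 0 ≤ α) (hβ : 0 ≤ β) (n : ℕ) (hn : 2 ≤ n)
    (x : ℝ) (hx : x ∈ Set.Icc (0 : ℝ) 1) :
    S p q α β n (fun t => t ^ 2) x =
      (q * pqInt p q n * pqInt p q (n - 1) * x ^ 2 +
        pqInt p q n * (2 * α + p ^ (n - 1)) * x + α ^ 2) / (pqInt p q n + β) ^ 2 := by
  obtain ⟨m, rfl⟩ : ∃ m, n = m + 2 := ⟨n - 2, by omega⟩
  have hN : 0 < pqInt p q (m + 2) := pqInt_pos hq hqp (m + 1)
  have hD : pqInt p q (m + 2) + β ≠ 0 := by positivity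
  have hP : (p : ℝ) ^ ((m + 2) * (m + 2 - 1) / 2) ≠ 0 :=
    pow_ne_zero _ (ne_of_gt (hp0 hq hqp))
  have key : ∀ k ∈ range (m + 2 + 1),
      (1 / p ^ ((m + 2) * (m + 2 - 1) / 2)) * pqChoose p q (m + 2) k * p ^ (k * (k - 1) / 2) *
        x ^ k * (∏ s ∈ range (m + 2 - k), (p ^ s - q ^ s * x)) *
        ((p ^ (m + 2 - k) * pqInt p q k + α) / (pqInt p q (m + 2) + β)) ^ 2 =
      (pqChoose p q (m + 2) k * p ^ (k * (k - 1) / 2) * x ^ k *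
          (∏ s ∈ range (m + 2 - k), (p ^ s - q ^ s * x)) *
          (p ^ (m + 2 - k) * pqInt p q k) ^ 2 +
        2 * α * (pqChoose p q (m + 2) k * p ^ (k * (k - 1) / 2) * x ^ k *
          (∏ s ∈ range (m + 2 - k), (p ^ s - q ^ s * x)) * (p ^ (m + 2 - k) * pqInt p q k)) +
        α ^ 2 * (pqChoose p q (m + 2) k * p ^ (k * (k - 1) / 2) * x ^ k *
          ∏ s ∈ range (m + 2 - k), (p ^ s - q ^ s * x))) /
        (p ^ ((m + 2) * (m + 2 - 1) / 2) * (pqInt p q (m + 2) + β) ^ 2) := by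
    intro k hk
    rw [div_pow]
    field_simp
    ring
  have h2 := h2sum hq hqp (m + 1) x
  have h1 := hsum hq hqp (m + 2) x
  have h0 := gsum hq hqp (m + 2) x
  simp only [show m + 1 + 1 = m + 2 from rfl] at h2
  calc S p q α β (m + 2) (fun t => t ^ 2) x
      = ∑ k ∈ range (m + 2 + 1),
        (pqChoose p q (m + 2) k * p ^ (k * (k - 1) / 2) * x ^ k *
            (∏ s ∈ range (m + 2 - k), (p ^ s - q ^ s * x)) *
            (p ^ (m + 2 - k) * pqInt p q k) ^ 2 +
          2 * α * (pqChoose p q (m + 2) k * p ^ (k * (k - 1) / 2) * x ^ k *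
            (∏ s ∈ range (m + 2 - k), (p ^ s - q ^ s * x)) * (p ^ (m + 2 - k) * pqInt p q k)) +
          α ^ 2 * (pqChoose p q (m + 2) k * p ^ (k * (k - 1) / 2) * x ^ k *
            ∏ s ∈ range (m + 2 - k), (p ^ s - q ^ s * x))) /
          (p ^ ((m + 2) * (m + 2 - 1) / 2) * (pqInt p q (m + 2) + β) ^ 2) :=
        Finset.sum_congr rfl key
    _ = ((q * pqInt p q (m + 2) * pqInt p q (m + 1) * x ^ 2 +
          p ^ (m + 1) * pqInt p q (m + 2) * x) * p ^ ((m + 2) * (m + 2 - 1) / 2) +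
        2 * α * (pqInt p q (m + 2) * x * p ^ ((m + 2) * (m + 2 - 1) / 2)) +
        α ^ 2 * p ^ ((m + 2) * (m + 2 - 1) / 2)) /
          (p ^ ((m + 2) * (m + 2 - 1) / 2) * (pqInt p q (m + 2) + β) ^ 2) := by
        rw [← Finset.sum_div, Finset.sum_add_distrib, Finset.sum_add_distrib,
          ← Finset.mul_sum, ← Finset.mul_sum, h2, h1, h0]
    _ = (q * pqInt p q (m + 2) * pqInt p q (m + 2 - 1) * x ^ 2 +
          pqInt p q (m + 2) * (2 * α + p ^ (m + 2 - 1)) * x + α ^ 2) /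
          (pqInt p q (m + 2) + β) ^ 2 := by
        rw [show (q * pqInt p q (m + 2) * pqInt p q (m + 1) * x ^ 2 +
              p ^ (m + 1) * pqInt p q (m + 2) * x) * p ^ ((m + 2) * (m + 2 - 1) / 2) +
            2 * α * (pqInt p q (m + 2) * x * p ^ ((m + 2) * (m + 2 - 1) / 2)) +
            α ^ 2 * p ^ ((m + 2) * (m + 2 - 1) / 2) =
            p ^ ((m + 2) * (m + 2 - 1) / 2) *
              (q * pqInt p q (m + 2) * pqInt p q (m + 1) * x ^ 2 +
                pqInt p q (m + 2) * (2 * α + p ^ (m + 1)) * x + α ^ 2) from by ring,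
          mul_div_mul_left _ _ hP]
        simp only [show m + 2 - 1 = m + 1 from rfl]
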